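/- Let f : ℂ → ℂ, let F be a primitive of f on ℍ, let γ₁, …, γ_d be real 2×2 matrices with positive determinant, and let a ∈ ℂ be such that the Hecke eigenform relation Σ_{j=1}^{d} (f|₂γ_j)(z) = a·f(z) holds for all z ∈ ℍ. Then for all τ, w ∈ ℍ: a·(F(τ) − F(w)) = Σ_{j=1}^{d} (F(γ_j·τ) − F(γ_j·w)). -/

import Mathlib

/-- The Möbius action of a real `2×2` matrix on `ℂ`: `A·z = (az+b)/(cz+d)`. -/
noncomputable def moebius (A : Matrix (Fin 2) (Fin 2) ℝ) (z : ℂ) : ℂ :=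
  ((A 0 0 : ℂ) * z + (A 0 1 : ℂ)) / ((A 1 0 : ℂ) * z + (A 1 1 : ℂ))

/-- The weight-2 slash of `f : ℂ → ℂ` by `A`: `(f|₂A)(z) = det(A)·(cz+d)⁻²·f(A·z)`. -/
noncomputable def slashTwo (f : ℂ → ℂ) (A : Matrix (Fin 2) (Fin 2) ℝ) (z : ℂ) : ℂ :=
  (A.det : ℂ) * ((A 1 0 : ℂ) * z + (A 1 1 : ℂ)) ^ (-2 : ℤ) * f (moebius A z)

lemma denom_ne_zero (A : Matrix (Fin 2) (Fin 2) ℝ) (hdet : 0 < A.det)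
    (z : ℂ) (hz : 0 < z.im) : (A 1 0 : ℂ) * z + (A 1 1 : ℂ) ≠ 0 := by
  intro h
  have him : ((A 1 0 : ℂ) * z + (A 1 1 : ℂ)).im = 0 := by rw [h]; simp
  simp [Complex.add_im, Complex.mul_im] at him
  have hc : A 1 0 = 0 := by
    rcases him with h1 | h1
    · exact h1
    · exact absurd h1 (ne_of_gt hz)
  have hre : ((A 1 0 : ℂ) * z + (A 1 1 : ℂ)).re = 0 := by rw [h]; simp
  simp [Complex.add_re, Complex.mul_re, hc] at hre
  rw [Matrix.det_fin_two, hc, hre] at hdet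
  simp at hdet

lemma moebius_im_pos (A : Matrix (Fin 2) (Fin 2) ℝ) (hdet : 0 < A.det)
    (z : ℂ) (hz : 0 < z.im) : 0 < (moebius A z).im := by
  have hne := denom_ne_zero A hdet z hz
  have hnsq : 0 < Complex.normSq ((A 1 0 : ℂ) * z + (A 1 1 : ℂ)) :=
    Complex.normSq_pos.2 hne
  have heq : (moebius A z).im
      = A.det * z.im / Complex.normSq ((A 1 0 : ℂ) * z + (A 1 1 : ℂ)) := by
    rw [moebius, Complex.div_im, Matrix.det_fin_two]
    field_simp [Complex.normSq_apply]
    simp only [Complex.add_im, Complex.add_re, Complex.mul_im, Complex.mul_re, Complex.ofReal_re, Complex.ofReal_im]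
    ring
  rw [heq]
  positivity

lemma hasDerivAt_moebius (A : Matrix (Fin 2) (Fin 2) ℝ) (z : ℂ)
    (hne : (A 1 0 : ℂ) * z + (A 1 1 : ℂ) ≠ 0) :
    HasDerivAt (moebius A) ((A.det : ℂ) * ((A 1 0 : ℂ) * z + (A 1 1 : ℂ)) ^ (-2 : ℤ)) z := by
  have h1 : HasDerivAt (fun z : ℂ => (A 0 0 : ℂ) * z + (A 0 1 : ℂ)) (A 0 0 : ℂ) z := by
    simpa using ((hasDerivAt_id z).const_mul (A 0 0 : ℂ)).add_const (A 0 1 : ℂ)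
  have h2 : HasDerivAt (fun z : ℂ => (A 1 0 : ℂ) * z + (A 1 1 : ℂ)) (A 1 0 : ℂ) z := by
    simpa using ((hasDerivAt_id z).const_mul (A 1 0 : ℂ)).add_const (A 1 1 : ℂ)
  have := h1.div h2 hne
  refine this.congr_deriv ?_
  rw [Matrix.det_fin_two, zpow_neg, zpow_two]
  field_simp
  push_cast
  ring

/-- If `F` is a primitive of `f` on `ℍ` and `Σ_j (f|₂γ_j) = a·f` on `ℍ`
for matrices `γ₁, …, γ_d` of positive determinant, then for all `τ, w ∈ ℍ`,
`a·(F(τ) − F(w)) = Σ_j (F(γ_j·τ) − F(γ_j·w))`. -/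
theorem hecke_eigenform_primitive_relation (f F : ℂ → ℂ)
    (hF : ∀ z : ℂ, 0 < z.im → HasDerivAt F (f z) z)
    (d : ℕ) (γ : Fin d → Matrix (Fin 2) (Fin 2) ℝ) (hdet : ∀ j, 0 < (γ j).det)
    (a : ℂ) (heig : ∀ z : ℂ, 0 < z.im → ∑ j : Fin d, slashTwo f (γ j) z = a * f z) :
    ∀ τ w : ℂ, 0 < τ.im → 0 < w.im →
      a * (F τ - F w) = ∑ j : Fin d, (F (moebius (γ j) τ) - F (moebius (γ j) w)) := by
  intro τ w hτ hw
  set s : Set ℂ := {z : ℂ | 0 < z.im} with hs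
  have hconv : Convex ℝ s := convex_halfSpace_im_gt 0
  set G : ℂ → ℂ := fun z => a * F z - ∑ j : Fin d, F (moebius (γ j) z) with hG
  have hG' : ∀ z ∈ s, HasDerivAt G 0 z := by
    intro z hz
    have hz' : 0 < z.im := hz
    have h1 : HasDerivAt (fun z => a * F z) (a * f z) z := (hF z hz').const_mul a
    have h2 : HasDerivAt (fun z => ∑ j : Fin d, F (moebius (γ j) z))
        (∑ j : Fin d, slashTwo f (γ j) z) z := by
      apply HasDerivAt.fun_sum
      intro j _
      have hne := denom_ne_zero (γ j) (hdet j) z hz'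
      have hm := hasDerivAt_moebius (γ j) z hne
      have hFm := hF (moebius (γ j) z) (moebius_im_pos (γ j) (hdet j) z hz')
      have := hFm.comp z hm
      rw [slashTwo]
      refine this.congr_deriv ?_
      ring
    have := h1.sub h2
    rw [heig z hz'] at this
    simp at this
    exact this
  have hdiff : DifferentiableOn ℂ G s := fun z hz => ((hG' z hz).differentiableAt).differentiableWithinAt
  have hopen : IsOpen s := isOpen_lt continuous_const Complex.continuous_im
  have hfd : ∀ z ∈ s, fderivWithin ℂ G s z = 0 := by
    intro z hz
    rw [fderivWithin_of_isOpen hopen hz]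
    have := (hG' z hz).hasFDerivAt.fderiv
    rw [this]
    ext
    simp
  have hconst : G τ = G w :=
    hconv.is_const_of_fderivWithin_eq_zero hdiff hfd hτ hw
  have : a * F τ - ∑ j : Fin d, F (moebius (γ j) τ)
      = a * F w - ∑ j : Fin d, F (moebius (γ j) w) := hconst
  rw [mul_sub, Finset.sum_sub_distrib]
  linear_combination this
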